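/- The 2nd simplicial homology of the 3-skeleton SC(3) of the simplicial set of circular permutations is ℤ: the simplicial chain complex generated by 1 vertex (the circular permutation of [0]), 1 edge, 2 triangles (the even and odd circular permutations of [2]), and 6 tetrahedra (the circular permutations of [3]), with the boundary maps given by bead deletion, has H₂ ≅ ℤ and H₁ = 0, matching the homology of the 2-sphere in these degrees. -/

import Mathlib

/-- Parities of the four faces of each of the 6 circular permutations of `[3]`
(rows indexed by ⟨0123⟩, ⟨0231⟩, ⟨0312⟩, ⟨0213⟩, ⟨0132⟩, ⟨0321⟩; the face of
parity 0 is the even circular permutation ⟨012⟩, parity 1 the odd one ⟨210⟩). -/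
def facePar : Fin 6 → Fin 4 → Fin 2 :=
  ![![0, 0, 0, 0], ![0, 0, 1, 1], ![0, 1, 1, 0], ![1, 0, 0, 1], ![1, 1, 0, 0], ![1, 1, 1, 1]]

/-- Boundary `∂₃ : C₃ = ℤ⁶ → C₂ = ℤ²`: alternating sum of the faces of the 6
tetrahedra (the circular permutations of `[3]`), faces given by bead deletion. -/
noncomputable def bdry3 : (Fin 6 → ℤ) →ₗ[ℤ] (Fin 2 → ℤ) :=
  Matrix.toLin' (fun s θ => ∑ i : Fin 4, if facePar θ i = s then (-1 : ℤ) ^ (i : ℕ) else 0)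

/-- Boundary `∂₂ : C₂ = ℤ² → C₁ = ℤ`: each triangle has its 3 faces equal to the
unique edge, with alternating signs. -/
noncomputable def bdry2 : (Fin 2 → ℤ) →ₗ[ℤ] (Fin 1 → ℤ) :=
  Matrix.toLin' (fun _ _ => ∑ i : Fin 3, (-1 : ℤ) ^ (i : ℕ))

/-- Boundary `∂₁ : C₁ = ℤ → C₀ = ℤ`: the two faces of the edge are the vertex. -/
noncomputable def bdry1 : (Fin 1 → ℤ) →ₗ[ℤ] (Fin 1 → ℤ) :=
  Matrix.toLin' (fun _ _ => ∑ i : Fin 2, (-1 : ℤ) ^ (i : ℕ))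

lemma bdry3_eq_zero : bdry3 = 0 := by
  have hM : (fun s θ => ∑ i : Fin 4, if facePar θ i = s then (-1 : ℤ) ^ (i : ℕ) else 0)
      = (0 : Matrix (Fin 2) (Fin 6) ℤ) := by
    funext s θ
    fin_cases s <;> fin_cases θ <;>
      simp [Fin.sum_univ_four, facePar] <;> decide
  rw [bdry3, hM]
  simp

lemma bdry2_apply (v : Fin 2 → ℤ) : bdry2 v = fun _ => v 0 + v 1 := by
  funext j
  rw [bdry2]
  erw [Matrix.toLin'_apply]
  simp [bdry2, Matrix.toLin'_apply, Matrix.mulVec, dotProduct,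
    Fin.sum_univ_two, Fin.sum_univ_three]

lemma bdry2_surj : Function.Surjective bdry2 := by
  intro y
  refine ⟨![y 0, 0], ?_⟩
  funext j
  rw [bdry2_apply]
  fin_cases j <;> simp

/-- The chain complex of the 3-skeleton `SC(3)` of the simplicial set of circular
permutations has `H₂ ≅ ℤ` and `H₁ = 0`, matching the homology of the 2-sphere. -/
theorem homology_SC3 :
    Nonempty ((↥(LinearMap.ker bdry2) ⧸
        Submodule.comap (LinearMap.ker bdry2).subtype (LinearMap.range bdry3)) ≃ₗ[ℤ] ℤ) ∧
    Submodule.comap (LinearMap.ker bdry1).subtype (LinearMap.range bdry2) = ⊤ := by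
  constructor
  · have hbot : Submodule.comap (LinearMap.ker bdry2).subtype (LinearMap.range bdry3) = ⊥ := by
      rw [bdry3_eq_zero]
      simp
    have e1 := Submodule.quotEquivOfEqBot _ hbot
    have e2 : (↥(LinearMap.ker bdry2)) ≃ₗ[ℤ] ℤ := by
      refine
        { toFun := fun v => v.1 0
          map_add' := fun a b => rfl
          map_smul' := fun c a => rfl
          invFun := fun x => ⟨![x, -x], ?_⟩
          left_inv := ?_
          right_inv := fun x => rfl }
      · rw [LinearMap.mem_ker]
        funext j
        rw [bdry2_apply]
        simp
      · rintro ⟨v, hv⟩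
        rw [LinearMap.mem_ker] at hv
        have h01 : v 0 + v 1 = 0 := congrFun ((bdry2_apply v).symm.trans hv) 0
        ext j
        fin_cases j <;> simp <;> omega
    exact ⟨e1.trans e2⟩
  · rw [LinearMap.range_eq_top.mpr bdry2_surj]
    simp
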